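/- The improper integral ∫_{-∞}^{0} ln(1 - e^y) dy converges and equals -π²/6 (that is, -ζ(2)). -/

import Mathlib

open MeasureTheory Real Set

private lemma exp_integrableOn (n : ℕ) :
    MeasureTheory.IntegrableOn (fun y : ℝ => Real.exp (((n : ℝ) + 1) * y)) (Set.Iio 0) := by
  have hexp : IntegrableOn Real.exp (Iio (0 : ℝ)) :=
    (integrableOn_exp_Iic 0).mono_set Iio_subset_Iic_self
  refine hexp.mono' ((Real.continuous_exp.comp (continuous_const.mul continuous_id)).aestronglyMeasurable) ?_
  filter_upwards [ae_restrict_mem measurableSet_Iio] with y hy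
  have hy' : y < 0 := hy
  rw [Real.norm_eq_abs, abs_of_nonneg (Real.exp_nonneg _)]
  apply Real.exp_le_exp.2
  nlinarith [(Nat.cast_nonneg n : (0:ℝ) ≤ n)]

private lemma exp_integral (n : ℕ) :
    ∫ y in Set.Iio (0 : ℝ), Real.exp (((n : ℝ) + 1) * y) = 1 / ((n : ℝ) + 1) := by
  have hc : (0 : ℝ) < (n : ℝ) + 1 := by positivity
  rw [setIntegral_congr_set Iio_ae_eq_Iic]
  have h1 : (∫ x : ℝ in Ioi 0, Real.exp (((n : ℝ) + 1) * (-x)))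
      = ∫ y in Iic (-(0:ℝ)), Real.exp (((n : ℝ) + 1) * y) :=
    integral_comp_neg_Ioi 0 (fun y => Real.exp (((n : ℝ) + 1) * y))
  rw [neg_zero] at h1
  rw [← h1]
  have h2 : (∫ x : ℝ in Ioi 0, Real.exp (-(((n : ℝ) + 1) * x)))
      = ((n : ℝ) + 1)⁻¹ • ∫ x : ℝ in Ioi (((n : ℝ) + 1) * 0), Real.exp (-x) :=
    integral_comp_mul_left_Ioi (fun u => Real.exp (-u)) 0 hc
  simp only [mul_zero] at h2
  simp only [mul_neg, neg_mul] at *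
  rw [h2, integral_exp_neg_Ioi_zero, smul_eq_mul, mul_one, one_div]

/-- The improper integral `∫_{-∞}^0 ln(1 - e^y) dy` converges and equals `-π²/6`. -/
theorem integral_log_one_sub_exp :
    MeasureTheory.IntegrableOn (fun y : ℝ => Real.log (1 - Real.exp y)) (Set.Iio 0) ∧
      ∫ y in Set.Iio (0 : ℝ), Real.log (1 - Real.exp y) = -(Real.pi ^ 2 / 6) := by
  set F : ℕ → ℝ → ℝ := fun n y => Real.exp (((n : ℝ) + 1) * y) / ((n : ℝ) + 1) with hF
  -- pointwise series expansion
  have hmain : ∀ y ∈ Iio (0 : ℝ), HasSum (fun n : ℕ => F n y) (-Real.log (1 - Real.exp y)) := by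
    intro y hy
    have h1 : |Real.exp y| < 1 := by
      rw [abs_of_pos (Real.exp_pos y)]
      exact Real.exp_lt_one_iff.2 hy
    have := Real.hasSum_pow_div_log_of_abs_lt_one h1
    refine this.congr_fun fun n => ?_
    rw [hF]
    simp only
    rw [← Real.exp_nat_mul]
    push_cast
    ring_nf
  have hFnonneg : ∀ n y, 0 ≤ F n y := fun n y => by
    rw [hF]; positivity
  have hFint : ∀ n, IntegrableOn (F n) (Iio 0) := fun n =>
    (exp_integrableOn n).div_const _
  have hFval : ∀ n, ∫ y in Iio (0 : ℝ), F n y = 1 / ((n : ℝ) + 1) ^ 2 := by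
    intro n
    rw [hF]
    simp only
    rw [integral_div, exp_integral n, div_div, ← sq]
  have hFmeas : ∀ n, AEStronglyMeasurable (F n) (volume.restrict (Iio (0:ℝ))) := fun n =>
    ((Real.continuous_exp.comp (continuous_const.mul continuous_id)).div_const _).aestronglyMeasurable
  have hFnorm : ∀ n, ∫⁻ y in Iio (0 : ℝ), ‖F n y‖₊ = ENNReal.ofReal (1 / ((n : ℝ) + 1) ^ 2) := by
    intro n
    simp_rw [← enorm_eq_nnnorm]
    rw [← ofReal_integral_norm_eq_lintegral_enorm (hFint n)]
    congr 1
    rw [← hFval n]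
    refine setIntegral_congr_fun measurableSet_Iio fun y _ => ?_
    rw [Real.norm_eq_abs, abs_of_nonneg (hFnonneg n y)]
  -- the Basel sum
  have hsum2 : HasSum (fun n : ℕ => 1 / ((n : ℝ) + 1) ^ 2) (Real.pi ^ 2 / 6) := by
    have h0 : HasSum (fun n : ℕ => 1 / ((n : ℝ)) ^ 2) (Real.pi ^ 2 / 6 + ∑ i ∈ Finset.range 1, 1 / ((i : ℝ)) ^ 2) := by
      simpa using hasSum_zeta_two
    have := (hasSum_nat_add_iff (f := fun n : ℕ => 1 / ((n : ℝ)) ^ 2) 1).2 h0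
    refine this.congr_fun fun n => ?_
    push_cast
    ring_nf
  have hlsum : ∑' n, ∫⁻ y in Iio (0 : ℝ), ‖F n y‖₊ = ENNReal.ofReal (Real.pi ^ 2 / 6) := by
    simp_rw [hFnorm]
    rw [← ENNReal.ofReal_tsum_of_nonneg (fun n => by positivity) hsum2.summable, hsum2.tsum_eq]
  have hlsum_ne : ∑' n, ∫⁻ y in Iio (0 : ℝ), ‖F n y‖₊ ≠ ⊤ := by
    rw [hlsum]; exact ENNReal.ofReal_ne_top
  -- a.e. equality of f with -tsum
  have haef : ∀ᵐ y ∂(volume.restrict (Iio (0:ℝ))),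
      Real.log (1 - Real.exp y) = -∑' n, F n y := by
    filter_upwards [ae_restrict_mem measurableSet_Iio] with y hy
    rw [(hmain y hy).tsum_eq, neg_neg]
  -- measurability of f
  have hfmeas : AEStronglyMeasurable (fun y : ℝ => Real.log (1 - Real.exp y))
      (volume.restrict (Iio (0:ℝ))) := by
    refine (ContinuousOn.aestronglyMeasurable ?_ measurableSet_Iio)
    refine ContinuousOn.log (Continuous.continuousOn (by continuity)) fun y hy => ?_
    have : Real.exp y < 1 := Real.exp_lt_one_iff.2 hy
    linarith
  -- integrability
  have hint : IntegrableOn (fun y : ℝ => Real.log (1 - Real.exp y)) (Iio 0) := by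
    refine ⟨hfmeas, ?_⟩
    rw [hasFiniteIntegral_def]
    have hle : ∫⁻ y in Iio (0 : ℝ), ‖Real.log (1 - Real.exp y)‖₊
        ≤ ∑' n, ∫⁻ y in Iio (0 : ℝ), ‖F n y‖₊ := by
      have hlt := lintegral_tsum fun n => (hFmeas n).enorm
      simp only [enorm_eq_nnnorm] at hlt
      rw [← hlt]
      refine lintegral_mono_ae ?_
      filter_upwards [ae_restrict_mem measurableSet_Iio] with y hy
      have hS := hmain y hy
      have hy1 : Real.exp y < 1 := Real.exp_lt_one_iff.2 hy
      have hnorm : ‖Real.log (1 - Real.exp y)‖ = ∑' n, F n y := by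
        rw [Real.norm_eq_abs,
          abs_of_nonpos (Real.log_nonpos (by linarith) (by linarith [Real.exp_pos y]))]
        exact hS.tsum_eq.symm
      refine le_of_eq ?_
      calc (‖Real.log (1 - Real.exp y)‖₊ : ENNReal)
          = ENNReal.ofReal ‖Real.log (1 - Real.exp y)‖ := (ofReal_norm_eq_enorm _).symm
        _ = ENNReal.ofReal (∑' n, F n y) := by rw [hnorm]
        _ = ∑' n, ENNReal.ofReal (F n y) :=
            ENNReal.ofReal_tsum_of_nonneg (fun n => hFnonneg n y) hS.summable
        _ = ∑' n, (‖F n y‖₊ : ENNReal) := by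
            refine tsum_congr fun n => ?_
            rw [← enorm_eq_nnnorm, ← ofReal_norm_eq_enorm, Real.norm_eq_abs, abs_of_nonneg (hFnonneg n y)]
    exact lt_of_le_of_lt hle (lt_of_le_of_ne le_top hlsum_ne)
  refine ⟨hint, ?_⟩
  rw [integral_congr_ae haef, integral_neg,
    integral_tsum hFmeas (by simp_rw [enorm_eq_nnnorm]; rw [hlsum]; exact ENNReal.ofReal_ne_top)]
  simp_rw [hFval]
  rw [hsum2.tsum_eq]
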